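/- arXiv:math/0701634 — 2 statements merged into one kernel-verified Lean document; each statement's English description precedes it below -/
import Mathlib

section
/- Let E be an elliptic curve over a field F with complex multiplication by the ring of integers O_K of an imaginary quadratic field K = ℚ(√d), and let p be a prime invertible in F with p ∤ 2d. Let t ∈ E[p^r] be a point generating E[p^r] as an O_K/p^r-module. Then γ(t) := e_{p^r}(t, √d · t) is a primitive p^r-th root of unity. -/
/-- Let `E` be an elliptic curve over a field `F` with CM by `O_K`,
`K = ℚ(√d)` imaginary quadratic, `p` a prime invertible in `F` with `p ∤ 2d`.  Here
`A` stands for `E[p^r]`, which is `p^r`-torsion of order `p^(2r)` (free of rank 1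
over `O_K/p^r`), `φ` for the CM action of `√d` (so `φ² = d`), and
`e : A × A → μ_{p^r} ⊆ L` for the Weil pairing (bilinear, alternating, valued in
`p^r`-th roots of unity, nondegenerate).  If `t` generates `E[p^r]` as an
`O_K/p^r`-module, then `γ(t) = e_{p^r}(t, √d·t)` is a primitive `p^r`-th root of
unity. -/
theorem gamma_of_generator_is_primitive_root
    (F : Type*) [Field F] (p r : ℕ) (hp : p.Prime) (hr : 1 ≤ r)
    (hinv : (p : F) ≠ 0) (d : ℤ) (hd : d < 0) (hdsf : Squarefree d)
    (hpd : ¬ (p : ℤ) ∣ 2 * d)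
    (A : Type*) [AddCommGroup A]
    (htor : ∀ x : A, (p ^ r) • x = 0)
    (hcard : Nat.card A = p ^ (2 * r))
    (φ : A →+ A) (hφ : ∀ x, φ (φ x) = d • x)
    (L : Type*) [Field L] (e : A → A → L)
    (hadd_left : ∀ x x' y, e (x + x') y = e x y * e x' y)
    (hadd_right : ∀ x y y', e x (y + y') = e x y * e x y')
    (halt : ∀ x, e x x = 1)
    (hord : ∀ x y, e x y ^ (p ^ r) = 1)
    (hnondeg : ∀ x, (∀ y, e x y = 1) → x = 0)
    (t : A) (hgen : ∀ x : A, ∃ a b : ℤ, x = a • t + b • φ t) :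
    IsPrimitiveRoot (e t (φ t)) (p ^ r) := by
  have hprne : p ^ r ≠ 0 := pow_ne_zero _ hp.pos.ne'
  have hne : ∀ x y, e x y ≠ 0 := by
    intro x y h
    have := hord x y
    rw [h, zero_pow hprne] at this
    exact zero_ne_one this
  have h0l : ∀ y, e 0 y = 1 := by
    intro y
    have h := hadd_left 0 0 y
    rw [add_zero] at h
    exact mul_left_cancel₀ (hne 0 y) (h.symm.trans (mul_one _).symm)
  have h0r : ∀ x, e x 0 = 1 := by
    intro x
    have h := hadd_right x 0 0
    rw [add_zero] at h
    exact mul_left_cancel₀ (hne x 0) (h.symm.trans (mul_one _).symm)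
  have hnl : ∀ (n : ℕ) x y, e (n • x) y = e x y ^ n := by
    intro n x y
    induction n with
    | zero => simpa using h0l y
    | succ k ih => rw [succ_nsmul, hadd_left, ih, pow_succ]
  have hnr : ∀ (n : ℕ) x y, e x (n • y) = e x y ^ n := by
    intro n x y
    induction n with
    | zero => simpa using h0r x
    | succ k ih => rw [succ_nsmul, hadd_right, ih, pow_succ]
  have hnegl : ∀ x y, e (-x) y = (e x y)⁻¹ := by
    intro x y
    have h := hadd_left x (-x) y
    rw [add_neg_cancel, h0l] at h
    exact eq_inv_of_mul_eq_one_right h.symm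
  have hnegr : ∀ x y, e x (-y) = (e x y)⁻¹ := by
    intro x y
    have h := hadd_right x y (-y)
    rw [add_neg_cancel, h0r] at h
    exact eq_inv_of_mul_eq_one_right h.symm
  have hzl : ∀ (a : ℤ) x y, e (a • x) y = e x y ^ a := by
    intro a x y
    induction a using Int.induction_on with
    | zero => simpa using h0l y
    | succ k ih => rw [add_smul, one_smul, hadd_left, ih, zpow_add₀ (hne x y), zpow_one]
    | pred k ih =>
        rw [sub_smul, one_smul, sub_eq_add_neg, hadd_left, hnegl, ih,
          zpow_sub₀ (hne x y), zpow_one, div_eq_mul_inv]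
  have hzr : ∀ (a : ℤ) x y, e x (a • y) = e x y ^ a := by
    intro a x y
    induction a using Int.induction_on with
    | zero => simpa using h0r x
    | succ k ih => rw [add_smul, one_smul, hadd_right, ih, zpow_add₀ (hne x y), zpow_one]
    | pred k ih =>
        rw [sub_smul, one_smul, sub_eq_add_neg, hadd_right, hnegr, ih,
          zpow_sub₀ (hne x y), zpow_one, div_eq_mul_inv]
  set ζ := e t (φ t) with hζdef
  have hζpr : ζ ^ (p ^ r) = 1 := hord t (φ t)
  -- key claim : ζ ^ (p^(r-1)) ≠ 1
  have hkey : ζ ^ (p ^ (r - 1)) ≠ 1 := by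
    intro hcontra
    set m := p ^ (r - 1) with hm
    have hs : (m • t : A) = 0 := by
      apply hnondeg
      intro y
      obtain ⟨a, b, rfl⟩ := hgen y
      rw [hadd_right, hzr, hzr, hnl, hnl, halt, one_pow, one_zpow, hcontra, one_zpow,
        mul_one]
    have ht' : (m : ℤ) • t = 0 := by rw [natCast_zsmul]; exact hs
    have hkill : ∀ x : A, (m : ℤ) • x = 0 := by
      intro x
      obtain ⟨a, b, rfl⟩ := hgen x
      rw [smul_add, smul_comm, ht', smul_zero, smul_comm (m : ℤ) b, ← map_zsmul φ, ht',
        map_zero, smul_zero, add_zero]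
    have hm1 : 0 < m := pow_pos hp.pos _
    have hmz : (0 : ℤ) < (m : ℤ) := Int.natCast_pos.mpr hm1
    have hsurj : Function.Surjective
        (fun q : Fin m × Fin m => (q.1 : ℤ) • t + (q.2 : ℤ) • φ t) := by
      intro x
      obtain ⟨a, b, rfl⟩ := hgen x
      have hmod : ∀ (c : ℤ) (z : A), (m : ℤ) • z = 0 → (c % m) • z = c • z := by
        intro c z hz
        have h1 : c • z = ((m : ℤ) * (c / m) + c % m) • z := by
          rw [Int.mul_ediv_add_emod]
        rw [h1, add_smul, mul_comm (m : ℤ), mul_smul, hz, smul_zero, zero_add]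
      refine ⟨⟨⟨(a % m).toNat, ?_⟩, ⟨(b % m).toNat, ?_⟩⟩, ?_⟩
      · have := Int.emod_lt_of_pos a hmz
        omega
      · have := Int.emod_lt_of_pos b hmz
        omega
      · simp only
        have ha0 : (0:ℤ) ≤ a % m := Int.emod_nonneg a hmz.ne'
        have hb0 : (0:ℤ) ≤ b % m := Int.emod_nonneg b hmz.ne'
        rw [Int.toNat_of_nonneg ha0, Int.toNat_of_nonneg hb0,
          hmod a t (hkill t), hmod b (φ t) (hkill (φ t))]
    have hle : Nat.card A ≤ Nat.card (Fin m × Fin m) := Nat.card_le_card_of_surjective _ hsurj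
    rw [hcard, Nat.card_prod, Nat.card_eq_fintype_card, Fintype.card_fin, hm, ← pow_add] at hle
    have hlt : p ^ ((r - 1) + (r - 1)) < p ^ (2 * r) :=
      Nat.pow_lt_pow_right hp.one_lt (by omega)
    exact absurd hle (not_le.mpr hlt)
  have hord1 : orderOf ζ ∣ p ^ r := orderOf_dvd_of_pow_eq_one hζpr
  obtain ⟨k, hk, hko⟩ := (Nat.dvd_prime_pow hp).mp hord1
  have hkr : k = r := by
    by_contra hkr
    have hk1 : k ≤ r - 1 := by omega
    apply hkey
    have hpk : ζ ^ p ^ k = 1 := by rw [← hko]; exact pow_orderOf_eq_one ζ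
    calc ζ ^ p ^ (r-1) = (ζ ^ p ^ k) ^ p ^ (r - 1 - k) := by
          rw [← pow_mul, ← pow_add, Nat.add_sub_cancel' hk1]
      _ = 1 := by rw [hpk, one_pow]
  have : orderOf ζ = p ^ r := by rw [hko, hkr]
  rw [← this]
  exact IsPrimitiveRoot.orderOf ζ
end

section
/- Let M be a free module of rank 2 over a commutative ring R with a perfect alternating pairing ⟨·,·⟩ : M × M → L into a rank-1 free R-module L (so ⋀²M ≅ L). Let φ ∈ End_R(M) satisfy φ² = d·id for a unit or nonzerodivisor d ∈ R, and suppose ⟨φ x, y⟩ = −⟨x, φ y⟩ for all x, y. Then for any e ∈ M, ⟨e, φ e⟩ generates L as an R-module if and only if e generates M as an R[φ]-module. -/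
set_option maxHeartbeats 1000000


/-- Let `M` be free of rank 2 over a commutative ring `R` with a
perfect alternating pairing `B : M × M → L` into a free rank-1 module `L`
(so `⋀²M ≅ L`), and let `φ ∈ End(M)` satisfy `φ² = d·id` with `d` a unit or a
nonzerodivisor, and `B(φx, y) = −B(x, φy)`.  Then for `e ∈ M`, the element
`B(e, φe)` generates `L` as an `R`-module if and only if `e` generates `M` as an
`R[φ]`-module. -/
theorem pairing_generator_iff_module_generator
    (R : Type*) [CommRing R]
    (M : Type*) [AddCommGroup M] [Module R M] [Module.Free R M]
    (L : Type*) [AddCommGroup L] [Module R L] [Module.Free R L]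
    (hM : Module.rank R M = 2) (hL : Module.rank R L = 1)
    (B : M →ₗ[R] M →ₗ[R] L)
    (halt : ∀ x : M, B x x = 0)
    (hperf₁ : Function.Bijective B)
    (hperf₂ : Function.Bijective B.flip)
    (φ : Module.End R M) (d : R)
    (hφ : φ ∘ₗ φ = d • LinearMap.id)
    (hd : IsUnit d ∨ d ∈ nonZeroDivisors R)
    (hanti : ∀ x y : M, B (φ x) y = - B x (φ y))
    (e : M) :
    Submodule.span R {B e (φ e)} = ⊤ ↔
      Submodule.span R (Set.range fun n : ℕ => (φ ^ n) e) = ⊤ := by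
  have hR : Nontrivial R := by
    by_contra h
    rw [not_nontrivial_iff_subsingleton] at h
    rw [rank_subsingleton] at hM
    exact absurd hM (by norm_num)
  have hMfin : Module.Finite R M := Module.finite_of_rank_eq_nat (by exact_mod_cast hM)
  have hLfin : Module.Finite R L := Module.finite_of_rank_eq_nat (by exact_mod_cast hL)
  obtain ⟨b⟩ : Nonempty (Module.Basis (Fin 2) R M) :=
    ⟨Module.finBasisOfFinrankEq R M (Module.finrank_eq_of_rank_eq (by exact_mod_cast hM))⟩
  obtain ⟨u⟩ : Nonempty (Module.Basis (Fin 1) R L) :=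
    ⟨Module.finBasisOfFinrankEq R L (Module.finrank_eq_of_rank_eq (by exact_mod_cast hL))⟩
  -- expansions
  have hexp : ∀ x : M, x = b.repr x 0 • b 0 + b.repr x 1 • b 1 := by
    intro x
    conv_lhs => rw [← b.sum_repr x]
    rw [Fin.sum_univ_two]
  have hexpL : ∀ l : L, l = u.repr l 0 • u 0 := by
    intro l
    conv_lhs => rw [← u.sum_repr l]
    simp
  have hreprL : ∀ r : R, u.repr (r • u 0) 0 = r := by
    intro r
    simp [Module.Basis.repr_self, Finsupp.single_apply]
  -- skew symmetry
  have hskew : ∀ x y : M, B y x = - B x y := by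
    intro x y
    have h : B y x + B x y = 0 := by
      have h := halt (x + y)
      simpa only [map_add, LinearMap.add_apply, halt x, halt y, zero_add, add_zero] using h
    rw [eq_neg_iff_add_eq_zero]
    exact h
  -- the pairing in coordinates
  have key1 : ∀ x y : M,
      B x y = (b.repr x 0 * b.repr y 1 - b.repr x 1 * b.repr y 0) • B (b 0) (b 1) := by
    intro x y
    conv_lhs => rw [hexp x, hexp y]
    simp only [map_add, map_smul, LinearMap.add_apply, LinearMap.smul_apply]
    rw [halt (b 0), halt (b 1), hskew (b 0) (b 1)]
    module
  set a : R := u.repr (B (b 0) (b 1)) 0 with ha_def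
  have ha : B (b 0) (b 1) = a • u 0 := hexpL _
  -- `a` is a unit, by perfectness
  have hunit_a : IsUnit a := by
    obtain ⟨m, hm⟩ := hperf₁.2 ((b.coord 0).smulRight (u 0))
    have h1 : B m (b 0) = u 0 := by
      rw [hm]
      simp [LinearMap.smulRight_apply, Module.Basis.coord_apply, Module.Basis.repr_self]
    rw [key1 m (b 0), ha, smul_smul] at h1
    have h2 : (b.repr m 0 * b.repr (b 0) 1 - b.repr m 1 * b.repr (b 0) 0) * a = 1 := by
      have h3 := hreprL ((b.repr m 0 * b.repr (b 0) 1 - b.repr m 1 * b.repr (b 0) 0) * a)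
      rw [h1] at h3
      rw [← h3]
      simp
    exact IsUnit.of_mul_eq_one (a := a) _ (by rw [mul_comm]; exact h2)
  -- generating L
  have spanL : ∀ l : L, Submodule.span R {l} = ⊤ ↔ IsUnit (u.repr l 0) := by
    intro l
    constructor
    · intro h
      have hu : u 0 ∈ Submodule.span R {l} := h ▸ Submodule.mem_top
      rw [Submodule.mem_span_singleton] at hu
      obtain ⟨s, hs⟩ := hu
      have hone : s * u.repr l 0 = 1 := by
        have := congrArg (fun z => u.repr z 0) hs
        simpa [Module.Basis.repr_self, Finsupp.single_apply] using this
      exact IsUnit.of_mul_eq_one s (by rw [mul_comm]; exact hone)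
    · intro h
      rw [eq_top_iff]
      rintro z -
      rw [Submodule.mem_span_singleton]
      obtain ⟨v, hv⟩ := h
      refine ⟨u.repr z 0 * ↑v⁻¹, ?_⟩
      conv_lhs => rw [hexpL l]
      rw [smul_smul, ← hv, mul_assoc, Units.inv_mul, mul_one]
      exact (hexpL z).symm
  -- generating M by two elements
  have spanM : ∀ x y : M, Submodule.span R {x, y} = ⊤ ↔
      IsUnit (b.repr x 0 * b.repr y 1 - b.repr x 1 * b.repr y 0) := by
    intro x y
    constructor
    · intro h
      have h0 : b 0 ∈ Submodule.span R {x, y} := h ▸ Submodule.mem_top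
      have h1 : b 1 ∈ Submodule.span R {x, y} := h ▸ Submodule.mem_top
      rw [Submodule.mem_span_pair] at h0 h1
      obtain ⟨p, q, hpq⟩ := h0
      obtain ⟨r, s, hrs⟩ := h1
      have e00 : p * b.repr x 0 + q * b.repr y 0 = 1 := by
        have := congrArg (fun z => b.repr z 0) hpq
        simpa [Module.Basis.repr_self, Finsupp.single_apply] using this
      have e01 : p * b.repr x 1 + q * b.repr y 1 = 0 := by
        have := congrArg (fun z => b.repr z 1) hpq
        simpa [Module.Basis.repr_self, Finsupp.single_apply] using this
      have e10 : r * b.repr x 0 + s * b.repr y 0 = 0 := by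
        have := congrArg (fun z => b.repr z 0) hrs
        simpa [Module.Basis.repr_self, Finsupp.single_apply] using this
      have e11 : r * b.repr x 1 + s * b.repr y 1 = 1 := by
        have := congrArg (fun z => b.repr z 1) hrs
        simpa [Module.Basis.repr_self, Finsupp.single_apply] using this
      refine IsUnit.of_mul_eq_one (p * s - q * r) ?_
      linear_combination (p * b.repr x 0 + q * b.repr y 0) * e11 + e00
        - (p * b.repr x 1 + q * b.repr y 1) * e10
    · intro h
      rw [eq_top_iff, ← b.span_eq, Submodule.span_le]
      rintro z ⟨i, rfl⟩
      have hr : (b.repr x 0 * b.repr y 1 - b.repr x 1 * b.repr y 0) * ↑h.unit⁻¹ = 1 :=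
        h.mul_val_inv
      fin_cases i
      · refine Submodule.mem_span_pair.2
          ⟨↑h.unit⁻¹ * b.repr y 1, -(↑h.unit⁻¹ * b.repr x 1), b.repr.injective ?_⟩
        ext i
        fin_cases i
        · simp only [map_add, map_smul, map_neg, Finsupp.coe_add, Finsupp.coe_smul,
            Finsupp.coe_neg, Pi.add_apply, Pi.smul_apply, Pi.neg_apply, smul_eq_mul,
            Module.Basis.repr_self, Finsupp.single_apply]
          norm_num
          linear_combination hr
        · simp only [map_add, map_smul, map_neg, Finsupp.coe_add, Finsupp.coe_smul,
            Finsupp.coe_neg, Pi.add_apply, Pi.smul_apply, Pi.neg_apply, smul_eq_mul,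
            Module.Basis.repr_self, Finsupp.single_apply]
          norm_num
          ring
      · refine Submodule.mem_span_pair.2
          ⟨-(↑h.unit⁻¹ * b.repr y 0), ↑h.unit⁻¹ * b.repr x 0, b.repr.injective ?_⟩
        ext i
        fin_cases i
        · simp only [map_add, map_smul, map_neg, Finsupp.coe_add, Finsupp.coe_smul,
            Finsupp.coe_neg, Pi.add_apply, Pi.smul_apply, Pi.neg_apply, smul_eq_mul,
            Module.Basis.repr_self, Finsupp.single_apply]
          norm_num
          ring
        · simp only [map_add, map_smul, map_neg, Finsupp.coe_add, Finsupp.coe_smul,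
            Finsupp.coe_neg, Pi.add_apply, Pi.smul_apply, Pi.neg_apply, smul_eq_mul,
            Module.Basis.repr_self, Finsupp.single_apply]
          norm_num
          linear_combination hr
  -- the span of the orbit is the span of {e, φ e}
  have horbit : Submodule.span R (Set.range fun n : ℕ => (φ ^ n) e)
      = Submodule.span R {e, φ e} := by
    have hφ' : φ * φ = d • LinearMap.id := by
      rw [Module.End.mul_eq_comp]; exact hφ
    have hstep : ∀ n : ℕ, (φ ^ (n + 2)) e = d • (φ ^ n) e := by
      intro n
      rw [pow_add, pow_two, hφ', Module.End.mul_apply]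
      simp
    have hmem : ∀ n : ℕ, (φ ^ n) e ∈ Submodule.span R {e, φ e} ∧
        (φ ^ (n + 1)) e ∈ Submodule.span R {e, φ e} := by
      intro n
      induction n with
      | zero =>
        constructor
        · rw [pow_zero, Module.End.one_apply]
          exact Submodule.subset_span (Set.mem_insert e {φ e})
        · rw [zero_add, pow_one]
          exact Submodule.subset_span (Set.mem_insert_of_mem e rfl)
      | succ n ih =>
        refine ⟨ih.2, ?_⟩
        rw [show n + 1 + 1 = n + 2 from rfl, hstep n]
        exact Submodule.smul_mem _ d ih.1
    apply le_antisymm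
    · rw [Submodule.span_le]
      rintro z ⟨n, rfl⟩
      exact (hmem n).1
    · rw [Submodule.span_le]
      rintro z hz
      rcases hz with rfl | hz
      · exact Submodule.subset_span ⟨0, by beta_reduce; rw [pow_zero, Module.End.one_apply]⟩
      · rcases hz with rfl
        exact Submodule.subset_span ⟨1, by beta_reduce; rw [pow_one]⟩
  -- put everything together
  have hrepr : u.repr (B e (φ e)) 0
      = (b.repr e 0 * b.repr (φ e) 1 - b.repr e 1 * b.repr (φ e) 0) * a := by
    rw [key1 e (φ e), ha, smul_smul, hreprL]
  rw [horbit, spanL, hrepr, IsUnit.mul_iff, ← spanM]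
  simp [hunit_a]
end
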